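/- In an idempotent residuated chain, for any element x we have {x^ℓ, x^r} = {x^⋆, x^*}, where x^⋆ = x^ℓ ∧ x^r and x^* = x^ℓ ∨ x^r; moreover, if x is central then x^ℓ = x^r = x^⋆ = x^*. -/
import Mathlib


/-- In an idempotent residuated chain, `{x^ℓ, x^r} = {x^⋆, x^*}`; moreover for
central `x` all four coincide. -/
theorem stmt14 {A : Type*} [LinearOrder A] [Monoid A]
    (ld rd : A → A → A)
    (resl : ∀ x y z : A, x * y ≤ z ↔ y ≤ ld x z)
    (resr : ∀ x y z : A, x * y ≤ z ↔ x ≤ rd z y)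
    (idem : ∀ x : A, x * x = x) :
    ∀ x : A,
      ({rd 1 x, ld x 1} : Set A) = {rd 1 x ⊓ ld x 1, rd 1 x ⊔ ld x 1} ∧
      ((∀ y : A, x * y = y * x) →
        rd 1 x = ld x 1 ∧ ld x 1 = rd 1 x ⊓ ld x 1 ∧
          rd 1 x ⊓ ld x 1 = rd 1 x ⊔ ld x 1) := by
  intro x
  constructor
  · rcases le_total (rd 1 x) (ld x 1) with h | h
    · rw [inf_eq_left.mpr h, sup_eq_right.mpr h]
    · rw [inf_eq_right.mpr h, sup_eq_left.mpr h, Set.pair_comm]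
  · intro hc
    have h1 : rd 1 x = ld x 1 := by
      apply le_antisymm
      · exact (resl x _ 1).mp (by rw [hc]; exact (resr _ x 1).mpr le_rfl)
      · exact (resr _ x 1).mp (by rw [← hc]; exact (resl x _ 1).mpr le_rfl)
    rw [h1, inf_idem, sup_idem]
    exact ⟨rfl, rfl, rfl⟩
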